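/- For every real number α with -1 < α < 1, the improper integral ∫₀^∞ t^α / (t² + 1) dt converges and equals π / (2 cos(απ/2)). -/

import Mathlib

open Real MeasureTheory Set

-- Real beta value
lemma real_beta (a : ℝ) (ha : 0 < a) (ha1 : a < 1) :
    IntervalIntegrable (fun x : ℝ => x ^ (a - 1) * (1 - x) ^ (-a)) volume 0 1 ∧
    ∫ x in (0:ℝ)..1, x ^ (a - 1) * (1 - x) ^ (-a) = π / Real.sin (π * a) := by
  have ha' : 0 < 1 - a := by linarith
  have hre1 : 0 < ((a : ℂ)).re := by simpa using ha
  have hre2 : 0 < ((1 - (a:ℝ) : ℂ)).re := by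
    simpa using ha'
  have hconv := Complex.betaIntegral_convergent hre1 (v := (1 - (a:ℝ) : ℂ)) hre2
  have hfun : ∀ x ∈ uIcc (0:ℝ) 1,
      (x : ℂ) ^ ((a:ℂ) - 1) * ((1:ℂ) - x) ^ ((1 - (a:ℝ) : ℂ) - 1)
        = ((x ^ (a - 1) * (1 - x) ^ (-a) : ℝ) : ℂ) := by
    intro x hx
    rw [uIcc_of_le (by norm_num)] at hx
    obtain ⟨hx0, hx1⟩ := hx
    have h1x : (0:ℝ) ≤ 1 - x := by linarith
    push_cast
    rw [Complex.ofReal_cpow hx0, Complex.ofReal_cpow h1x]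
    push_cast
    norm_num
  have hle : (0:ℝ) ≤ 1 := by norm_num
  have heq : EqOn (fun x : ℝ => (x : ℂ) ^ ((a:ℂ) - 1) * ((1:ℂ) - x) ^ ((1 - (a:ℝ) : ℂ) - 1))
      (fun x : ℝ => ((x ^ (a - 1) * (1 - x) ^ (-a) : ℝ) : ℂ)) (Ioc 0 1) := by
    intro x hx
    exact hfun x (Ioc_subset_Icc_self.trans (by rw [uIcc_of_le hle]) hx)
  rw [intervalIntegrable_iff_integrableOn_Ioc_of_le hle] at hconv
  have hconv2 : IntegrableOn (fun x : ℝ => ((x ^ (a - 1) * (1 - x) ^ (-a) : ℝ) : ℂ)) (Ioc 0 1) :=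
    hconv.congr_fun heq measurableSet_Ioc
  have hint : IntegrableOn (fun x : ℝ => x ^ (a - 1) * (1 - x) ^ (-a)) (Ioc 0 1) := by
    have := hconv2.re
    simpa [IntegrableOn] using this
  constructor
  · rwa [intervalIntegrable_iff_integrableOn_Ioc_of_le hle]
  · -- value of the complex beta integral
    have hbeta : Complex.betaIntegral (a:ℂ) (1 - (a:ℝ) : ℂ)
        = ((π / Real.sin (π * a) : ℝ) : ℂ) := by
      have h1 := Complex.Gamma_mul_Gamma_eq_betaIntegral hre1 hre2
      have h2 := Complex.Gamma_mul_Gamma_one_sub (a : ℂ)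
      rw [show (a : ℂ) + (1 - (a:ℝ) : ℂ) = 1 by ring] at h1
      rw [Complex.Gamma_one, one_mul] at h1
      rw [show ((1:ℂ) - (a:ℂ)) = (1 - (a:ℝ) : ℂ) by ring] at h2
      rw [← h1, h2]
      push_cast [Complex.ofReal_sin]
      ring
    have hIcc : ∫ x in (0:ℝ)..1, ((x ^ (a - 1) * (1 - x) ^ (-a) : ℝ) : ℂ)
        = Complex.betaIntegral (a:ℂ) (1 - (a:ℝ) : ℂ) := by
      rw [Complex.betaIntegral]
      exact (intervalIntegral.integral_congr (fun x hx => (hfun x hx).symm))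
    rw [intervalIntegral.integral_ofReal] at hIcc
    have := hIcc.trans hbeta
    exact_mod_cast this

theorem coulson_f_integral (α : ℝ) (h1 : -1 < α) (h2 : α < 1) :
    IntegrableOn (fun t : ℝ => t ^ α / (t ^ 2 + 1)) (Ioi 0) ∧
    ∫ t in Ioi (0 : ℝ), t ^ α / (t ^ 2 + 1) = π / (2 * Real.cos (α * π / 2)) := by
  set a : ℝ := (1 + α) / 2 with ha_def
  have ha : 0 < a := by rw [ha_def]; linarith
  have ha1 : a < 1 := by rw [ha_def]; linarith
  obtain ⟨hbint, hbval⟩ := real_beta a ha ha1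
  set g : ℝ → ℝ := fun x => x ^ 2 / (x ^ 2 + 1) with hg_def
  set g' : ℝ → ℝ := fun x => 2 * x / (x ^ 2 + 1) ^ 2 with hg'_def
  set F : ℝ → ℝ := fun x => (1 / 2) * (x ^ (a - 1) * (1 - x) ^ (-a)) with hF_def
  have hc : ∀ x : ℝ, (0:ℝ) < x ^ 2 + 1 := fun x => by positivity
  have hderiv : ∀ x ∈ Ioi (0:ℝ), HasDerivWithinAt g (g' x) (Ioi 0) x := by
    intro x hx
    have h : HasDerivAt g ((2 * x ^ 1 * (x ^ 2 + 1) - x ^ 2 * (2 * x ^ 1)) / (x ^ 2 + 1) ^ 2) x := by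
      exact ((hasDerivAt_pow 2 x).div ((hasDerivAt_pow 2 x).add_const 1) (hc x).ne').congr_deriv (by norm_num)
    have h2 : (2 * x ^ 1 * (x ^ 2 + 1) - x ^ 2 * (2 * x ^ 1)) / (x ^ 2 + 1) ^ 2 = g' x := by
      rw [hg'_def]; field_simp; ring
    rw [h2] at h
    exact h.hasDerivWithinAt
  have hinj : InjOn g (Ioi (0:ℝ)) := by
    intro x hx y hy hxy
    simp only [hg_def] at hxy
    rw [div_eq_div_iff (hc x).ne' (hc y).ne'] at hxy
    have hxy2 : x ^ 2 = y ^ 2 := by nlinarith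
    have h0 : (x - y) * (x + y) = 0 := by nlinarith
    rcases mul_eq_zero.mp h0 with h | h
    · linarith
    · have hx' : (0:ℝ) < x := hx
      have hy' : (0:ℝ) < y := hy
      linarith
  have himg : g '' Ioi 0 = Ioo (0:ℝ) 1 := by
    ext y
    constructor
    · rintro ⟨x, hx, rfl⟩
      have hx' : (0:ℝ) < x := hx
      refine ⟨by positivity, ?_⟩
      rw [div_lt_one (hc x)]
      nlinarith
    · rintro ⟨hy0, hy1⟩
      have h1y : (0:ℝ) < 1 - y := by linarith
      have hu : (0:ℝ) < y / (1 - y) := by positivity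
      refine ⟨Real.sqrt (y / (1 - y)), Real.sqrt_pos.mpr hu, ?_⟩
      simp only [hg_def]
      rw [Real.sq_sqrt hu.le]
      field_simp
      ring
  have hpt : ∀ x ∈ Ioi (0:ℝ), |g' x| • F (g x) = x ^ α / (x ^ 2 + 1) := by
    intro x hx
    have hx' : (0:ℝ) < x := hx
    have habs : |g' x| = 2 * x / (x ^ 2 + 1) ^ 2 := by
      rw [hg'_def]; exact abs_of_pos (by positivity)
    have h1g : 1 - x ^ 2 / (x ^ 2 + 1) = 1 / (x ^ 2 + 1) := by field_simp; ring
    have e2 : ((1:ℝ) / (x ^ 2 + 1)) ^ (-a) = (x ^ 2 + 1) ^ a := by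
      rw [one_div, Real.inv_rpow (hc x).le, Real.rpow_neg (hc x).le, inv_inv]
    have e1 : ((x:ℝ) ^ 2) ^ (a - 1) = x ^ (2 * (a - 1)) := by
      rw [← Real.rpow_natCast x 2, ← Real.rpow_mul hx'.le]
      norm_num
    have hsub : (x ^ 2 + 1) ^ a = (x ^ 2 + 1) ^ (a - 1) * (x ^ 2 + 1) := by
      rw [← Real.rpow_add_one (hc x).ne' (a - 1)]
      congr 1; ring
    have hxα : x ^ α = x ^ (2 * (a - 1)) * x := by
      rw [← Real.rpow_add_one hx'.ne' (2 * (a - 1))]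
      congr 1; rw [ha_def]; ring
    simp only [hF_def, hg_def, smul_eq_mul, habs, h1g, e2]
    rw [Real.div_rpow (by positivity) (hc x).le, e1, hsub, hxα]
    have hQ : (0:ℝ) < (x ^ 2 + 1) ^ (a - 1) := Real.rpow_pos_of_pos (hc x) _
    have hP : (0:ℝ) < x ^ (2 * (a - 1)) := Real.rpow_pos_of_pos hx' _
    field_simp
  have hFint : IntegrableOn F (Ioo (0:ℝ) 1) := by
    rw [intervalIntegrable_iff_integrableOn_Ioc_of_le (by norm_num : (0:ℝ) ≤ 1)] at hbint
    exact (hbint.mono_set Ioo_subset_Ioc_self).const_mul _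
  have hiff := integrableOn_image_iff_integrableOn_abs_deriv_smul measurableSet_Ioi hderiv hinj F
  rw [himg] at hiff
  constructor
  · exact (hiff.mp hFint).congr_fun hpt measurableSet_Ioi
  · have hchg := integral_image_eq_integral_abs_deriv_smul measurableSet_Ioi hderiv hinj F
    rw [himg] at hchg
    have hR : ∫ x in Ioi (0:ℝ), |g' x| • F (g x) = ∫ t in Ioi (0:ℝ), t ^ α / (t ^ 2 + 1) :=
      setIntegral_congr_fun measurableSet_Ioi hpt
    rw [← hR, ← hchg]
    have hsin : Real.sin (π * a) = Real.cos (α * π / 2) := by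
      rw [ha_def, show π * ((1 + α) / 2) = π / 2 + α * π / 2 by ring]
      simp [Real.sin_add]
    have hIoo : ∫ x in Ioo (0:ℝ) 1, x ^ (a - 1) * (1 - x) ^ (-a) = π / Real.sin (π * a) := by
      rw [← MeasureTheory.integral_Ioc_eq_integral_Ioo, ← intervalIntegral.integral_of_le (by norm_num : (0:ℝ) ≤ 1)]
      exact hbval
    calc ∫ x in Ioo (0:ℝ) 1, F x
        = (1 / 2) * ∫ x in Ioo (0:ℝ) 1, x ^ (a - 1) * (1 - x) ^ (-a) := by
          rw [hF_def, ← MeasureTheory.integral_const_mul]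
      _ = π / (2 * Real.cos (α * π / 2)) := by
          rw [hIoo, hsin]; ring
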